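/- Let E be a Borel equivalence relation on a standard Borel space X with perfectly many classes. Then E^{[ℤ]}_free is Borel reducible to (E^{<ω})^{[ℤ]}_p.i., i.e., the restriction of E^{[ℤ]} to the free part of X^ℤ is Borel reducible to the restriction of (E^{<ω})^{[ℤ]} to the pairwise-inequivalent part. -/

import Mathlib

/-- The Γ-jump of an equivalence relation `E` on `X`. -/
def GammaJump (Γ : Type*) [Group Γ] {X : Type*} (E : X → X → Prop) :
    (Γ → X) → (Γ → X) → Prop :=
  fun x y => ∃ γ : Γ, ∀ α : Γ, E (x (γ⁻¹ * α)) (y α)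

/-- Borel reducibility of binary relations on measurable spaces. -/
def BorelReducible {X Y : Type*} [MeasurableSpace X] [MeasurableSpace Y]
    (E : X → X → Prop) (F : Y → Y → Prop) : Prop :=
  ∃ f : X → Y, Measurable f ∧ ∀ x x', E x x' ↔ F (f x) (f x')

/-- `E^{<ω}`: coordinatewise equivalence of finite sequences of the same length. -/
def FinSeqRel {X : Type*} (E : X → X → Prop) :
    (Σ n : ℕ, Fin n → X) → (Σ n : ℕ, Fin n → X) → Prop :=
  fun x y => ∃ h : x.1 = y.1, ∀ i : Fin x.1, E (x.2 i) (y.2 (Fin.cast h i))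

/-- `E` has perfectly many classes. -/
def PerfectlyManyClasses {X : Type*} [MeasurableSpace X] (E : X → X → Prop) : Prop :=
  ∃ f : (ℕ → Bool) → X, Measurable f ∧ Function.Injective f ∧
    ∀ a b, a ≠ b → ¬ E (f a) (f b)

/-- The free part of `X^Γ`: those `x` such that for every `γ ≠ 1`, the shift `γ·x` is
not `E^Γ`-related to `x`. -/
def FreePart (Γ : Type*) [Group Γ] {X : Type*} (E : X → X → Prop) : Set (Γ → X) :=
  {x | ∀ γ : Γ, γ ≠ 1 → ¬ ∀ α : Γ, E (x (γ⁻¹ * α)) (x α)}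

/-- The pairwise-inequivalent part of `X^Γ`. -/
def PIPart (Γ : Type*) {X : Type*} (E : X → X → Prop) : Set (Γ → X) :=
  {x | ∀ γ δ : Γ, γ ≠ δ → ¬ E (x γ) (x δ)}

namespace CCAux

variable {X : Type*}

def Inv2 (E : X → X → Prop) (z : ℤ → X) (k : ℤ) : Prop :=
  ∀ i j : ℤ, E (z i) (z j) ↔ E (z (i + k)) (z (j + k))

noncomputable def dN (E : X → X → Prop) (z : ℤ → X) : ℕ :=
  sInf {n : ℕ | 0 < n ∧ Inv2 E z (n : ℤ)}

def Good (E : X → X → Prop) (z : ℤ → X) (s : ℤ) : Prop :=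
  ∀ j : ℤ, 0 < j → ¬ E (z s) (z (s + j * (dN E z : ℤ)))

noncomputable def sF (E : X → X → Prop) (z : ℤ → X) (n : ℤ) : ℤ :=
  n + ((sInf {t : ℕ | Good E z (n + (t : ℤ))} : ℕ) : ℤ)

open Classical in
noncomputable def bitF (E : X → X → Prop) (z : ℤ → X) (n : ℤ) (p : ℤ × ℤ) : Bool :=
  if E (z (n + p.1)) (z (n + p.2)) then true else false

noncomputable def tagF (E : X → X → Prop) (z : ℤ → X) (n : ℤ) : ℕ → Bool :=
  fun m => bitF E z n ((Denumerable.eqv (ℤ × ℤ)).symm m)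

def FreeZ (E : X → X → Prop) (z : ℤ → X) : Prop :=
  ∀ k : ℤ, k ≠ 0 → ∃ a : ℤ, ¬ E (z (a - k)) (z a)

variable {E : X → X → Prop} {z : ℤ → X}

theorem inv2_add {k l : ℤ} (hk : Inv2 E z k) (hl : Inv2 E z l) : Inv2 E z (k + l) := by
  intro i j
  have h1 := hk i j
  have h2 := hl (i + k) (j + k)
  simp only [add_assoc] at h2
  exact h1.trans h2

theorem inv2_zero : Inv2 E z 0 := by intro i j; simp

theorem inv2_neg {k : ℤ} (hk : Inv2 E z k) : Inv2 E z (-k) := by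
  intro i j
  have := hk (i + -k) (j + -k)
  simp only [add_assoc, neg_add_cancel, add_zero] at this
  exact this.symm

theorem inv2_intMul {k : ℤ} (hk : Inv2 E z k) (m : ℤ) : Inv2 E z (m * k) := by
  induction m using Int.induction_on with
  | zero => simpa using (inv2_zero : Inv2 E z 0)
  | succ i ih =>
      have := inv2_add ih hk
      have e : (i : ℤ) * k + k = (i + 1) * k := by ring
      rwa [e] at this
  | pred i ih =>
      have := inv2_add ih (inv2_neg hk)
      have e : (-i : ℤ) * k + -k = (-i - 1) * k := by ring
      rwa [e] at this

theorem inv2_natAbs {k : ℤ} (hk : Inv2 E z k) : Inv2 E z (k.natAbs : ℤ) := by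
  rcases Int.natAbs_eq k with h | h
  · rwa [← h]
  · have := inv2_neg hk
    rwa [h, neg_neg] at this


theorem dN_mem (h : {n : ℕ | 0 < n ∧ Inv2 E z (n : ℤ)}.Nonempty) :
    0 < dN E z ∧ Inv2 E z (dN E z : ℤ) :=
  Nat.sInf_mem h

theorem dN_dvd {k : ℤ} (hk : Inv2 E z k) (hk0 : k ≠ 0) :
    {n : ℕ | 0 < n ∧ Inv2 E z (n : ℤ)}.Nonempty ∧ (dN E z : ℤ) ∣ k := by
  have hne : {n : ℕ | 0 < n ∧ Inv2 E z (n : ℤ)}.Nonempty :=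
    ⟨k.natAbs, Int.natAbs_pos.mpr hk0, inv2_natAbs hk⟩
  refine ⟨hne, ?_⟩
  obtain ⟨hdpos, hdinv⟩ := dN_mem hne
  set d : ℤ := (dN E z : ℤ) with hd
  have hd0 : (0:ℤ) < d := by rw [hd]; exact_mod_cast hdpos
  have hr : Inv2 E z (k % d) := by
    have h2 : k % d = k + (-(k / d)) * d := by rw [Int.emod_def]; ring
    rw [h2]
    exact inv2_add hk (inv2_intMul hdinv (-(k / d)))
  have h0r : 0 ≤ k % d := Int.emod_nonneg k (ne_of_gt hd0)
  have hrlt : k % d < d := Int.emod_lt_of_pos k hd0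
  by_cases hr0 : k % d = 0
  · exact Int.dvd_of_emod_eq_zero hr0
  · exfalso
    have hcast : (((k % d).toNat : ℤ)) = k % d := Int.toNat_of_nonneg h0r
    have hmem : (k % d).toNat ∈ {n : ℕ | 0 < n ∧ Inv2 E z (n : ℤ)} := by
      constructor
      · have : (0:ℤ) < (((k % d).toNat : ℤ)) := by
          rw [hcast]; exact lt_of_le_of_ne h0r (Ne.symm hr0)
        exact_mod_cast this
      · show Inv2 E z (((k % d).toNat : ℤ))
        rw [hcast]; exact hr
    have hlt : (k % d).toNat < dN E z := by
      have h5 : (((k % d).toNat : ℤ)) < d := by rw [hcast]; exact hrlt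
      rw [hd] at h5
      exact_mod_cast h5
    exact Nat.notMem_of_lt_sInf hlt hmem

theorem good_shift (hdinv : Inv2 E z (dN E z : ℤ)) (m : ℤ) (s : ℤ) :
    Good E z s ↔ Good E z (s + m * (dN E z : ℤ)) := by
  set d : ℤ := (dN E z : ℤ)
  have H := inv2_intMul hdinv m
  constructor
  · intro hg j hj hEE
    have e : s + m * d + j * d = s + j * d + m * d := by ring
    rw [e] at hEE
    exact hg j hj ((H s (s + j * d)).mpr hEE)
  · intro hg j hj hEE
    have h2 := (H s (s + j * d)).mp hEE
    have e : s + j * d + m * d = s + m * d + j * d := by ring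
    rw [e] at h2
    exact hg j hj h2

theorem exists_good (hE : Equivalence E) (hfree : FreeZ E z)
    (hne : {n : ℕ | 0 < n ∧ Inv2 E z (n : ℤ)}.Nonempty) : ∃ s, Good E z s := by
  by_contra hno
  push_neg at hno
  obtain ⟨hdpos, hdinv⟩ := dN_mem hne
  set d : ℤ := (dN E z : ℤ) with hd
  have hd0 : (0:ℤ) < d := by rw [hd]; exact_mod_cast hdpos
  have hch : ∀ s : ℤ, ∃ j : ℤ, 0 < j ∧ E (z s) (z (s + j * d)) := by
    intro s
    have h := hno s
    unfold Good at h
    push_neg at h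
    exact h
  choose jf hjp hjE using hch
  set L : ℤ := ∏ r ∈ Finset.range (dN E z), jf (r : ℤ) with hL
  have hLpos : 0 < L := Finset.prod_pos (fun r _ => hjp (r : ℤ))
  have key : ∀ s : ℤ, E (z s) (z (s + L * d)) := by
    intro s
    set r : ℕ := (s % d).toNat with hrdef
    have hcast : ((r : ℤ)) = s % d := Int.toNat_of_nonneg (Int.emod_nonneg s (ne_of_gt hd0))
    have hrlt : r < dN E z := by
      have h5 : ((r : ℤ)) < d := by rw [hcast]; exact Int.emod_lt_of_pos s hd0
      rw [hd] at h5
      exact_mod_cast h5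
    have hdvd : jf (r : ℤ) ∣ L := Finset.dvd_prod_of_mem _ (Finset.mem_range.mpr hrlt)
    have iterate : ∀ t : ℕ, E (z (r : ℤ)) (z ((r : ℤ) + ((t : ℤ) * jf (r : ℤ)) * d)) := by
      intro t
      induction t with
      | zero => simpa using hE.refl (z (r : ℤ))
      | succ t ih =>
          have H := inv2_intMul hdinv ((t : ℤ) * jf (r : ℤ))
          have step := (H (r : ℤ) ((r : ℤ) + jf (r : ℤ) * d)).mp (hjE (r : ℤ))
          have e : (r : ℤ) + jf (r : ℤ) * d + (t : ℤ) * jf (r : ℤ) * d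
              = (r : ℤ) + (((t : ℤ) + 1) * jf (r : ℤ)) * d := by ring
          rw [e] at step
          have e2 : (r : ℤ) + (t : ℤ) * jf (r : ℤ) * d
              = (r : ℤ) + ((t : ℤ) * jf (r : ℤ)) * d := by ring
          rw [e2] at step
          have := hE.trans ih step
          have e3 : ((t : ℤ) + 1) = (((t + 1 : ℕ)) : ℤ) := by push_cast; ring
          rwa [e3] at this
    have hq0 : 0 ≤ L / jf (r : ℤ) := Int.ediv_nonneg hLpos.le (hjp (r : ℤ)).le
    have hqe : ((L / jf (r : ℤ)).toNat : ℤ) * jf (r : ℤ) = L := by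
      rw [Int.toNat_of_nonneg hq0]
      exact Int.ediv_mul_cancel hdvd
    have hbase : E (z (r : ℤ)) (z ((r : ℤ) + L * d)) := by
      have := iterate (L / jf (r : ℤ)).toNat
      rwa [hqe] at this
    have H2 := inv2_intMul hdinv (s / d)
    have step := (H2 (r : ℤ) ((r : ℤ) + L * d)).mp hbase
    have hsum : (r : ℤ) + s / d * d = s := by
      rw [hcast]
      have := Int.emod_add_mul_ediv s d
      linarith [this]
    have e4 : (r : ℤ) + L * d + s / d * d = s + L * d := by linarith
    rwa [hsum, e4] at step
  have hLd : L * d ≠ 0 := ne_of_gt (mul_pos hLpos hd0)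
  obtain ⟨a, ha⟩ := hfree (L * d) hLd
  apply ha
  have := key (a - L * d)
  have e : a - L * d + L * d = a := by ring
  rwa [e] at this


theorem goods_nonempty (hE : Equivalence E) (hfree : FreeZ E z)
    (hne : {n : ℕ | 0 < n ∧ Inv2 E z (n : ℤ)}.Nonempty) (n : ℤ) :
    {t : ℕ | Good E z (n + (t : ℤ))}.Nonempty := by
  obtain ⟨s, hs⟩ := exists_good hE hfree hne
  obtain ⟨hdpos, hdinv⟩ := dN_mem hne
  set d : ℤ := (dN E z : ℤ) with hd
  have hd1 : (1:ℤ) ≤ d := by rw [hd]; exact_mod_cast hdpos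
  set m : ℕ := (n - s).natAbs with hm
  have hgood2 : Good E z (s + (m : ℤ) * d) := (good_shift hdinv (m : ℤ) s).mp hs
  have hge : n ≤ s + (m : ℤ) * d := by
    have h1 : n - s ≤ (m : ℤ) := Int.le_natAbs
    have h2 : (m : ℤ) ≤ (m : ℤ) * d := le_mul_of_one_le_right (by positivity) hd1
    linarith
  refine ⟨(s + (m : ℤ) * d - n).toNat, ?_⟩
  show Good E z (n + ((s + (m : ℤ) * d - n).toNat : ℤ))
  rw [Int.toNat_of_nonneg (by linarith)]
  have e : n + (s + (m : ℤ) * d - n) = s + (m : ℤ) * d := by ring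
  rwa [e]

theorem good_sF (hE : Equivalence E) (hfree : FreeZ E z)
    (hne : {n : ℕ | 0 < n ∧ Inv2 E z (n : ℤ)}.Nonempty) (n : ℤ) :
    Good E z (sF E z n) :=
  Nat.sInf_mem (goods_nonempty hE hfree hne n)

theorem sF_shift (hdinv : Inv2 E z (dN E z : ℤ)) {k : ℤ} (hdvd : (dN E z : ℤ) ∣ k) (n : ℤ) :
    sF E z (n + k) = sF E z n + k := by
  have hsets : {t : ℕ | Good E z (n + k + (t : ℤ))} = {t : ℕ | Good E z (n + (t : ℤ))} := by
    ext t
    simp only [Set.mem_setOf_eq]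
    have h1 := good_shift hdinv (k / (dN E z : ℤ)) (n + (t : ℤ))
    rw [Int.ediv_mul_cancel hdvd] at h1
    have e : n + (t : ℤ) + k = n + k + (t : ℤ) := by ring
    rw [e] at h1
    exact h1.symm
  unfold sF
  rw [hsets]
  ring

theorem good_not (hE : Equivalence E) (hdinv : Inv2 E z (dN E z : ℤ)) {s k : ℤ}
    (hs : Good E z s) (hdvd : (dN E z : ℤ) ∣ k) (hk : k ≠ 0) : ¬ E (z s) (z (s + k)) := by
  set d : ℤ := (dN E z : ℤ) with hd
  set q : ℤ := k / d with hq
  have hqd : q * d = k := Int.ediv_mul_cancel hdvd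
  have hq0 : q ≠ 0 := by
    intro h; apply hk; rw [← hqd, h]; ring
  rcases lt_or_gt_of_ne hq0 with hneg | hpos
  · intro hEE
    have hs' : Good E z (s + q * d) := (good_shift hdinv q s).mp hs
    have h2 : E (z (s + q * d)) (z (s + q * d + (-q) * d)) := by
      have e : s + q * d + (-q) * d = s := by ring
      rw [e]
      have h3 := hE.symm hEE
      rwa [← hqd] at h3
    exact hs' (-q) (by linarith) h2
  · intro hEE
    apply hs q hpos
    rwa [← hqd] at hEE

theorem ite_bool_iff {p q : Prop} [Decidable p] [Decidable q]
    (h : (if p then true else false) = (if q then true else false)) : p ↔ q := by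
  by_cases hp : p <;> by_cases hq : q <;> simp_all

theorem inv_of_tag {a b : ℤ} (htag : tagF E z a = tagF E z b) : Inv2 E z (b - a) := by
  have hbit : ∀ p : ℤ × ℤ, bitF E z a p = bitF E z b p := by
    intro p
    have := congrFun htag (Denumerable.eqv (ℤ × ℤ) p)
    simpa [tagF, Equiv.symm_apply_apply] using this
  classical
  intro i j
  have key := ite_bool_iff (hbit (i - a, j - a))
  have e1 : a + (i - a) = i := by ring
  have e2 : a + (j - a) = j := by ring
  have e3 : b + (i - a) = i + (b - a) := by ring
  have e4 : b + (j - a) = j + (b - a) := by ring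
  simpa only [e1, e2, e3, e4] using key


section Transfer

variable {z' : ℤ → X} {g : ℤ}

theorem T1 (hE : Equivalence E) (hp : ∀ a : ℤ, E (z (a - g)) (z' a)) (i j : ℤ) :
    E (z' i) (z' j) ↔ E (z (i - g)) (z (j - g)) := by
  constructor
  · intro h
    exact hE.trans (hE.trans (hp i) h) (hE.symm (hp j))
  · intro h
    exact hE.trans (hE.trans (hE.symm (hp i)) h) (hp j)

theorem T2 (hE : Equivalence E) (hp : ∀ a : ℤ, E (z (a - g)) (z' a)) (k : ℤ) :
    Inv2 E z' k ↔ Inv2 E z k := by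
  constructor
  · intro h i j
    have h2 := h (i + g) (j + g)
    rw [T1 hE hp, T1 hE hp] at h2
    have e1 : i + g - g = i := by ring
    have e2 : j + g - g = j := by ring
    have e3 : i + g + k - g = i + k := by ring
    have e4 : j + g + k - g = j + k := by ring
    rwa [e1, e2, e3, e4] at h2
  · intro h i j
    rw [T1 hE hp, T1 hE hp]
    have h2 := h (i - g) (j - g)
    have e3 : i - g + k = i + k - g := by ring
    have e4 : j - g + k = j + k - g := by ring
    rwa [e3, e4] at h2

theorem T3 (hE : Equivalence E) (hp : ∀ a : ℤ, E (z (a - g)) (z' a)) :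
    dN E z' = dN E z := by
  unfold dN
  congr 1
  ext n
  simp only [Set.mem_setOf_eq]
  exact and_congr Iff.rfl (T2 hE hp (n : ℤ))

theorem T4 (hE : Equivalence E) (hp : ∀ a : ℤ, E (z (a - g)) (z' a)) (s : ℤ) :
    Good E z' s ↔ Good E z (s - g) := by
  unfold Good
  rw [T3 hE hp]
  refine forall_congr' fun j => imp_congr Iff.rfl (not_congr ?_)
  rw [T1 hE hp]
  have e : s + j * (dN E z : ℤ) - g = s - g + j * (dN E z : ℤ) := by ring
  rw [e]

theorem T5 (hE : Equivalence E) (hp : ∀ a : ℤ, E (z (a - g)) (z' a)) (n : ℤ) :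
    sF E z' n = sF E z (n - g) + g := by
  have hsets : {t : ℕ | Good E z' (n + (t : ℤ))} = {t : ℕ | Good E z (n - g + (t : ℤ))} := by
    ext t
    simp only [Set.mem_setOf_eq]
    rw [T4 hE hp]
    have e : n + (t : ℤ) - g = n - g + (t : ℤ) := by ring
    rw [e]
  unfold sF
  rw [hsets]
  ring

theorem T6 (hE : Equivalence E) (hp : ∀ a : ℤ, E (z (a - g)) (z' a)) (n : ℤ) :
    tagF E z' n = tagF E z (n - g) := by
  classical
  funext m
  unfold tagF bitF
  set p := (Denumerable.eqv (ℤ × ℤ)).symm m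
  apply if_congr _ rfl rfl
  rw [T1 hE hp]
  have e1 : n + p.1 - g = n - g + p.1 := by ring
  have e2 : n + p.2 - g = n - g + p.2 := by ring
  rw [e1, e2]

end Transfer


section Mult

variable (E : X → X → Prop)

def zf (x : Multiplicative ℤ → X) : ℤ → X := fun n => x (Multiplicative.ofAdd n)

def trip (u v w : X) : Fin 3 → X := fun i => if i.val = 0 then u else if i.val = 1 then v else w

theorem trip0 (u v w : X) : trip u v w 0 = u := rfl
theorem trip1 (u v w : X) : trip u v w 1 = v := rfl
theorem trip2 (u v w : X) : trip u v w 2 = w := rfl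

noncomputable def reduct (c : (ℕ → Bool) → X) (x : Multiplicative ℤ → X) :
    Multiplicative ℤ → (Σ n : ℕ, Fin n → X) :=
  fun α => ⟨3, trip (x α) (zf x (sF E (zf x) (Multiplicative.toAdd α)))
    (c (tagF E (zf x) (Multiplicative.toAdd α)))⟩

theorem mulconv (k : ℤ) (α : Multiplicative ℤ) :
    (Multiplicative.ofAdd k)⁻¹ * α = Multiplicative.ofAdd (Multiplicative.toAdd α - k) := by
  apply Multiplicative.toAdd.injective
  simp only [toAdd_mul, toAdd_inv, toAdd_ofAdd]
  ring

theorem jump_iff {Y : Type*} (R : Y → Y → Prop) (x y : Multiplicative ℤ → Y) :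
    GammaJump (Multiplicative ℤ) R x y ↔
      ∃ g : ℤ, ∀ a : ℤ, R (x (Multiplicative.ofAdd (a - g))) (y (Multiplicative.ofAdd a)) := by
  constructor
  · rintro ⟨γ, h⟩
    refine ⟨Multiplicative.toAdd γ, fun a => ?_⟩
    have h2 := h (Multiplicative.ofAdd a)
    have e : γ⁻¹ * Multiplicative.ofAdd a
        = Multiplicative.ofAdd (a - Multiplicative.toAdd γ) := by
      have := mulconv (Multiplicative.toAdd γ) (Multiplicative.ofAdd a)
      rwa [ofAdd_toAdd] at this
    rwa [e] at h2
  · rintro ⟨g, h⟩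
    refine ⟨Multiplicative.ofAdd g, fun α => ?_⟩
    have h2 := h (Multiplicative.toAdd α)
    rwa [← mulconv g α, ofAdd_toAdd] at h2

theorem freeZ_of_mem {x : Multiplicative ℤ → X} (hx : x ∈ FreePart (Multiplicative ℤ) E) :
    FreeZ E (zf x) := by
  intro k hk
  by_contra hno
  push_neg at hno
  have hne1 : Multiplicative.ofAdd k ≠ 1 := by
    intro h
    apply hk
    have := congrArg Multiplicative.toAdd h
    simpa using this
  apply hx (Multiplicative.ofAdd k) hne1
  intro α
  have h2 := hno (Multiplicative.toAdd α)
  show E (x ((Multiplicative.ofAdd k)⁻¹ * α)) (x α)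
  rw [mulconv k α]
  exact h2

theorem reduct_pi (hE : Equivalence E) (c : (ℕ → Bool) → X)
    (hcE : ∀ a b, a ≠ b → ¬ E (c a) (c b)) {x : Multiplicative ℤ → X}
    (hx : x ∈ FreePart (Multiplicative ℤ) E) :
    reduct E c x ∈ PIPart (Multiplicative ℤ) (FinSeqRel E) := by
  intro γ δ hne hF
  have hfree : FreeZ E (zf x) := freeZ_of_mem E hx
  obtain ⟨h3, hco⟩ := hF
  set z : ℤ → X := zf x with hz
  set a : ℤ := Multiplicative.toAdd γ with ha
  set b : ℤ := Multiplicative.toAdd δ with hb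
  have hk : b - a ≠ 0 := by
    rw [sub_ne_zero]
    intro h
    exact hne (Multiplicative.toAdd.injective (h.symm))
  have h2 : E (c (tagF E z a)) (c (tagF E z b)) := hco ((2 : Fin 3))
  have htag : tagF E z a = tagF E z b := by
    by_contra h'
    exact hcE _ _ h' h2
  have hinvk : Inv2 E z (b - a) := inv_of_tag htag
  obtain ⟨hnemp, hdvd⟩ := dN_dvd hinvk hk
  obtain ⟨hdpos, hdinv⟩ := dN_mem hnemp
  have hgood : Good E z (sF E z a) := good_sF hE hfree hnemp a
  have hsF : sF E z b = sF E z a + (b - a) := by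
    have := sF_shift hdinv hdvd a
    have e : a + (b - a) = b := by ring
    rwa [e] at this
  have h1 : E (z (sF E z a)) (z (sF E z b)) := hco ((1 : Fin 3))
  rw [hsF] at h1
  exact good_not hE hdinv hgood hdvd hk h1

theorem reduct_correct (hE : Equivalence E) (c : (ℕ → Bool) → X)
    (x x' : Multiplicative ℤ → X) :
    GammaJump (Multiplicative ℤ) E x x' ↔
      GammaJump (Multiplicative ℤ) (FinSeqRel E) (reduct E c x) (reduct E c x') := by
  rw [jump_iff E x x', jump_iff (FinSeqRel E)]
  constructor
  · rintro ⟨g, hp⟩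
    have hp' : ∀ a : ℤ, E (zf x (a - g)) (zf x' a) := hp
    refine ⟨g, fun n => ?_⟩
    refine ⟨rfl, fun i => ?_⟩
    have hT5 := T5 hE hp' n
    have hT6 := T6 hE hp' n
    fin_cases i
    · exact hp' n
    · show E (zf x (sF E (zf x) (n - g))) (zf x' (sF E (zf x') n))
      rw [hT5]
      have h2 := hp' (sF E (zf x) (n - g) + g)
      have e : sF E (zf x) (n - g) + g - g = sF E (zf x) (n - g) := by ring
      rwa [e] at h2
    · show E (c (tagF E (zf x) (n - g))) (c (tagF E (zf x') n))
      rw [hT6]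
      exact hE.refl _
  · rintro ⟨g, hF⟩
    refine ⟨g, fun a => ?_⟩
    obtain ⟨h3, hco⟩ := hF a
    exact hco ((0 : Fin 3))

end Mult


section Meas

variable [MeasurableSpace X] {E : X → X → Prop}

theorem measurable_sigmaMk3 (m : ℕ) :
    Measurable (@Sigma.mk ℕ (fun n => (Fin n → X)) m) := by
  intro s hs
  exact (MeasurableSpace.measurableSet_iInf.mp hs) m

theorem mp_basic (hEBorel : MeasurableSet {p : X × X | E p.1 p.2}) (i j : ℤ) :
    Measurable (fun x : Multiplicative ℤ → X => E (zf x i) (zf x j)) := by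
  rw [← measurableSet_setOf]
  have h : Measurable (fun x : Multiplicative ℤ → X =>
      (x (Multiplicative.ofAdd i), x (Multiplicative.ofAdd j))) :=
    Measurable.prodMk (measurable_pi_apply _) (measurable_pi_apply _)
  exact h hEBorel

theorem minv (hEBorel : MeasurableSet {p : X × X | E p.1 p.2}) (k : ℤ) :
    Measurable (fun x : Multiplicative ℤ → X => Inv2 E (zf x) k) := by
  unfold Inv2
  exact Measurable.forall fun i => Measurable.forall fun j =>
    Measurable.iff (mp_basic hEBorel i j) (mp_basic hEBorel (i + k) (j + k))

theorem msInf {α : Type*} [MeasurableSpace α] {P : α → ℕ → Prop}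
    (h : ∀ n, Measurable fun x => P x n) (m : ℕ) :
    MeasurableSet {x | sInf {n | P x n} = m} := by
  have key : ∀ x, (sInf {n | P x n} = m ↔
      ((P x m ∧ ∀ l, l < m → ¬ P x l) ∨ (m = 0 ∧ ∀ n, ¬ P x n))) := by
    intro x
    constructor
    · intro hm
      by_cases hne : {n | P x n}.Nonempty
      · left
        refine ⟨hm ▸ Nat.sInf_mem hne, fun l hl => ?_⟩
        rw [← hm] at hl
        exact Nat.notMem_of_lt_sInf hl
      · right
        have hemp : {n | P x n} = ∅ := Set.not_nonempty_iff_eq_empty.mp hne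
        constructor
        · rw [← hm, hemp, Nat.sInf_empty]
        · intro n hn
          exact hne ⟨n, hn⟩
    · rintro (⟨hPm, hmin⟩ | ⟨rfl, hall⟩)
      · refine le_antisymm (Nat.sInf_le hPm) ?_
        by_contra hlt
        push_neg at hlt
        exact hmin _ hlt (Nat.sInf_mem ⟨m, hPm⟩)
      · have hemp : {n | P x n} = ∅ := by
          ext n; simp [hall n]
        rw [hemp, Nat.sInf_empty]
  have hset : {x | sInf {n | P x n} = m} =
      {x | (P x m ∧ ∀ l, l < m → ¬ P x l) ∨ (m = 0 ∧ ∀ n, ¬ P x n)} :=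
    Set.ext fun x => key x
  rw [hset, measurableSet_setOf]
  exact Measurable.or
    ((h m).and (Measurable.forall fun l => Measurable.imp measurable_const (h l).not))
    (Measurable.and measurable_const (Measurable.forall fun n => (h n).not))

theorem mdN (hEBorel : MeasurableSet {p : X × X | E p.1 p.2}) (m : ℕ) :
    MeasurableSet {x : Multiplicative ℤ → X | dN E (zf x) = m} := by
  unfold dN
  exact msInf (fun n => Measurable.and measurable_const (minv hEBorel (n : ℤ))) m

theorem mgood (hEBorel : MeasurableSet {p : X × X | E p.1 p.2}) (s : ℤ) :
    Measurable (fun x : Multiplicative ℤ → X => Good E (zf x) s) := by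
  unfold Good
  refine Measurable.forall fun j => Measurable.imp measurable_const (Measurable.not ?_)
  have hset : (fun x : Multiplicative ℤ → X =>
      E (zf x s) (zf x (s + j * (dN E (zf x) : ℤ)))) =
      (fun x => ∃ m : ℕ, dN E (zf x) = m ∧ E (zf x s) (zf x (s + j * (m : ℤ)))) := by
    funext x
    apply propext
    constructor
    · intro h
      exact ⟨dN E (zf x), rfl, h⟩
    · rintro ⟨m, hm, h⟩
      rw [hm]
      exact h
  rw [hset]
  exact Measurable.exists fun m =>
    Measurable.and (measurableSet_setOf.mp (mdN hEBorel m)) (mp_basic hEBorel _ _)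

theorem msF (hEBorel : MeasurableSet {p : X × X | E p.1 p.2}) (n t : ℤ) :
    MeasurableSet {x : Multiplicative ℤ → X | sF E (zf x) n = t} := by
  by_cases h : ∃ u : ℕ, t = n + (u : ℤ)
  · obtain ⟨u, hu⟩ := h
    have hset : {x : Multiplicative ℤ → X | sF E (zf x) n = t} =
        {x | sInf {t' : ℕ | Good E (zf x) (n + (t' : ℤ))} = u} := by
      ext x
      simp only [Set.mem_setOf_eq, sF, hu]
      constructor
      · intro h2
        have h3 : ((sInf {t' : ℕ | Good E (zf x) (n + (t' : ℤ))} : ℕ) : ℤ) = (u : ℤ) := by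
          omega
        exact_mod_cast h3
      · intro h2
        rw [h2]
    rw [hset]
    exact msInf (fun m => mgood hEBorel (n + (m : ℤ))) u
  · have hset : {x : Multiplicative ℤ → X | sF E (zf x) n = t} = ∅ := by
      ext x
      simp only [Set.mem_setOf_eq, Set.mem_empty_iff_false, iff_false]
      intro h2
      exact h ⟨sInf {t' : ℕ | Good E (zf x) (n + (t' : ℤ))}, by rw [← h2]; rfl⟩
    rw [hset]
    exact MeasurableSet.empty

theorem meval (hEBorel : MeasurableSet {p : X × X | E p.1 p.2}) (n : ℤ) :
    Measurable (fun x : Multiplicative ℤ → X => zf x (sF E (zf x) n)) := by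
  intro A hA
  have hset : (fun x : Multiplicative ℤ → X => zf x (sF E (zf x) n)) ⁻¹' A =
      ⋃ t : ℤ, ({x : Multiplicative ℤ → X | sF E (zf x) n = t} ∩
        ((fun x : Multiplicative ℤ → X => zf x t) ⁻¹' A)) := by
    ext x
    simp only [Set.mem_preimage, Set.mem_iUnion, Set.mem_inter_iff, Set.mem_setOf_eq]
    constructor
    · intro h
      exact ⟨sF E (zf x) n, rfl, h⟩
    · rintro ⟨t, ht, h⟩
      rwa [ht]
  rw [hset]
  exact MeasurableSet.iUnion fun t =>
    (msF hEBorel n t).inter ((measurable_pi_apply (Multiplicative.ofAdd t)) hA)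

theorem mtag (hEBorel : MeasurableSet {p : X × X | E p.1 p.2}) (n : ℤ) :
    Measurable (fun x : Multiplicative ℤ → X => tagF E (zf x) n) := by
  apply measurable_pi_lambda
  intro m
  apply measurable_to_countable'
  intro y
  set p := (Denumerable.eqv (ℤ × ℤ)).symm m with hp
  have hset : (fun x : Multiplicative ℤ → X => tagF E (zf x) n m) ⁻¹' {y} =
      if y = true then {x | E (zf x (n + p.1)) (zf x (n + p.2))}
      else {x | E (zf x (n + p.1)) (zf x (n + p.2))}ᶜ := by
    ext x
    by_cases hy : y = true <;>
      by_cases hEx : E (zf x (n + p.1)) (zf x (n + p.2)) <;>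
      simp [tagF, bitF, hy, hEx, ← hp]
  rw [hset]
  by_cases hy : y = true <;> simp only [hy, if_true, if_false] <;>
    first
      | exact measurableSet_setOf.mpr (mp_basic hEBorel _ _)
      | exact (measurableSet_setOf.mpr (mp_basic hEBorel _ _)).compl

theorem mreduct (hEBorel : MeasurableSet {p : X × X | E p.1 p.2}) (c : (ℕ → Bool) → X) (hc : Measurable c) :
    Measurable (reduct E c) := by
  apply measurable_pi_lambda
  intro α
  have h1 : Measurable (fun x : Multiplicative ℤ → X =>
      trip (x α) (zf x (sF E (zf x) (Multiplicative.toAdd α)))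
        (c (tagF E (zf x) (Multiplicative.toAdd α)))) := by
    apply measurable_pi_lambda
    intro i
    fin_cases i
    · exact measurable_pi_apply α
    · exact meval hEBorel (Multiplicative.toAdd α)
    · exact hc.comp (mtag hEBorel (Multiplicative.toAdd α))
  exact (measurable_sigmaMk3 3).comp h1

end Meas

end CCAux

/-- If `E` is a Borel equivalence relation with perfectly many classes,
then `E^{[ℤ]}` restricted to the free part is Borel reducible to `(E^{<ω})^{[ℤ]}`
restricted to the pairwise-inequivalent part. -/
theorem free_part_reducible_pi_part
    {X : Type*} [MeasurableSpace X] [StandardBorelSpace X]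
    (E : X → X → Prop) (hE : Equivalence E)
    (hEBorel : MeasurableSet {p : X × X | E p.1 p.2})
    (hperf : PerfectlyManyClasses E) :
    BorelReducible
      (fun a b : FreePart (Multiplicative ℤ) E => GammaJump (Multiplicative ℤ) E a.1 b.1)
      (fun a b : PIPart (Multiplicative ℤ) (FinSeqRel E) =>
        GammaJump (Multiplicative ℤ) (FinSeqRel E) a.1 b.1) := by
  obtain ⟨c, hcm, hcinj, hcE⟩ := hperf
  refine ⟨fun a => ⟨CCAux.reduct E c a.1, CCAux.reduct_pi E hE c hcE a.2⟩, ?_, ?_⟩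
  · exact Measurable.subtype_mk ((CCAux.mreduct hEBorel c hcm).comp measurable_subtype_coe)
  · intro a b
    exact CCAux.reduct_correct E hE c a.1 b.1
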